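/- Let X be a separable metrizable space and let (X_s)_{s∈T} be a Sierpiński stratification of X. Fix n ∈ ℕ and let Tⁿ = { s₁*⋯*sₙ : s₁,…,sₙ ∈ T and |s₁| = ⋯ = |sₙ| } be the tree whose nodes are n-tuples of equal-length nodes of T (ordered coordinatewise, so that a node extends another iff each coordinate extends the corresponding coordinate). For s₁*⋯*sₙ ∈ Tⁿ set H_{s₁*⋯*sₙ} = φₙ[X_{s₁} × ⋯ × X_{sₙ}] ⊆ ℱₙ(X). Then (H_t)_{t∈Tⁿ} is a Sierpiński stratification of ℱₙ(X). -/

import Mathlib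

open Set Topology Filter

/-- The Vietoris topology on `Set X` induced by a topology `t` on `X`, generated by the
subbasic sets `{F | F ⊆ U}` and `{F | F ∩ U ≠ ∅}` for `U` open in `t`. -/
def vietoris {X : Type*} (t : TopologicalSpace X) : TopologicalSpace (Set X) :=
  TopologicalSpace.generateFrom
    {S | (∃ U : Set X, IsOpen[t] U ∧ S = {F : Set X | F ⊆ U}) ∨
         (∃ U : Set X, IsOpen[t] U ∧ S = {F : Set X | (F ∩ U).Nonempty})}

/-- `ℱₙ(X)`: the hyperspace of nonempty subsets of `X` of cardinality at most `n`. -/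
def FinHypN (n : ℕ) (X : Type*) : Type _ := {F : Set X // F.Nonempty ∧ F.encard ≤ n}

noncomputable instance FinHypN.instCoeOut {n : ℕ} {X : Type*} : CoeOut (FinHypN n X) (Set X) :=
  ⟨Subtype.val⟩

/-- `ℱₙ(X)` carries the (subspace) Vietoris topology. -/
instance FinHypN.instTopologicalSpace {n : ℕ} {X : Type*} [t : TopologicalSpace X] :
    TopologicalSpace (FinHypN n X) :=
  (vietoris t).induced Subtype.val

/-- `(Xs s)_{s ∈ T}` is a Sierpiński stratification of the space `X`:
`T` is a nonempty tree over a countable alphabet `A` (a nonempty, prefix-closed set of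
finite sequences), each `Xs s` is closed, `Xs ∅ = X`, each `Xs s` is the union of the
`Xs t` for `t` an immediate successor of `s` in `T`, and along every infinite branch the
sets converge to a point. -/
structure IsSierpinskiStratification {X : Type*} [TopologicalSpace X] {A : Type*}
    (T : Set (List A)) (Xs : List A → Set X) : Prop where
  countable_alphabet : Countable A
  nonempty : T.Nonempty
  prefix_closed : ∀ l ∈ T, ∀ l' : List A, l' <+: l → l' ∈ T
  isClosed : ∀ s ∈ T, IsClosed (Xs s)
  root : Xs [] = Set.univ
  succ_eq : ∀ s ∈ T, Xs s = ⋃ t ∈ {t | t ∈ T ∧ ∃ a : A, t = s ++ [a]}, Xs t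
  branch_converges : ∀ σ : ℕ → A, (∀ k : ℕ, (List.range k).map σ ∈ T) →
    ∃ p : X, ∀ V ∈ nhds p, ∀ᶠ k in Filter.atTop, Xs ((List.range k).map σ) ⊆ V


section Aux

lemma exists_range_eq' {X : Type*} {n : ℕ} {F : Set X} (hne : F.Nonempty) (hcard : F.encard ≤ n) :
    ∃ f : Fin n → X, F = Set.range f := by
  have hfin : F.Finite := Set.finite_of_encard_le_coe hcard
  obtain ⟨x0, hx0⟩ := hne
  set L : List X := hfin.toFinset.toList with hL
  have hlen : L.length ≤ n := by
    have h1 : L.length = hfin.toFinset.card := Finset.length_toList _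
    have := ((Set.encard_le_coe_iff_finite_ncard_le).1 hcard).2
    rwa [Set.ncard_eq_toFinset_card F hfin, ← h1] at this
  have hmemL : ∀ x, x ∈ L ↔ x ∈ F := by
    intro x; rw [hL, Finset.mem_toList, Set.Finite.mem_toFinset]
  refine ⟨fun i => L.getD i x0, ?_⟩
  ext y
  simp only [Set.mem_range]
  constructor
  · intro hy
    obtain ⟨j, hj, rfl⟩ := List.mem_iff_getElem.1 ((hmemL y).2 hy)
    exact ⟨⟨j, lt_of_lt_of_le hj hlen⟩, List.getD_eq_getElem L x0 hj⟩
  · rintro ⟨i, rfl⟩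
    by_cases h : (i : ℕ) < L.length
    · have : L.getD i x0 = L[(i:ℕ)] := List.getD_eq_getElem L x0 h
      rw [this]; exact (hmemL _).1 (List.getElem_mem h)
    · rw [List.getD_eq_default L x0 (not_lt.1 h)]; exact hx0

lemma vietoris_isOpen_subsets {X : Type*} {t : TopologicalSpace X} {U : Set X} (hU : IsOpen[t] U) :
    IsOpen[vietoris t] {F : Set X | F ⊆ U} :=
  TopologicalSpace.GenerateOpen.basic _ (Or.inl ⟨U, hU, rfl⟩)

lemma vietoris_isOpen_hits {X : Type*} {t : TopologicalSpace X} {U : Set X} (hU : IsOpen[t] U) :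
    IsOpen[vietoris t] {F : Set X | (F ∩ U).Nonempty} :=
  TopologicalSpace.GenerateOpen.basic _ (Or.inr ⟨U, hU, rfl⟩)

lemma vietoris_mem_nhds_iff {X : Type*} {t : TopologicalSpace X} {a : Set X} {s : Set (Set X)} :
    s ∈ @nhds _ (vietoris t) a ↔ ∃ O ⊆ s, IsOpen[vietoris t] O ∧ a ∈ O := by
  letI := vietoris t
  exact mem_nhds_iff

lemma finHypN_nhds_eq {n : ℕ} {X : Type*} [t : TopologicalSpace X] (F : FinHypN n X) :
    𝓝 F = Filter.comap Subtype.val (@nhds _ (vietoris t) (F : Set X)) :=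
  @nhds_induced _ _ (vietoris t) Subtype.val F

end Aux


/-- If `(Xs s)_{s ∈ T}` is a Sierpiński stratification of a separable metrizable space `X`
and `n ≥ 1`, then `(φₙ[Xs s₁ × ⋯ × Xs sₙ])_{s₁*⋯*sₙ ∈ Tⁿ}` is a Sierpiński stratification
of `ℱₙ(X)`.  A node of `Tⁿ` (an `n`-tuple `s₁*⋯*sₙ` of equal-length nodes of `T`, ordered
coordinatewise) is encoded as a finite sequence over the alphabet `Fin n → A`, whose `i`-th
coordinate projection must be a node of `T`. -/


theorem finHypN_sierpinskiStratification {X A : Type*} [TopologicalSpace X]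
    [TopologicalSpace.SeparableSpace X] [TopologicalSpace.MetrizableSpace X]
    (T : Set (List A)) (Xs : List A → Set X)
    (hT : IsSierpinskiStratification T Xs) (n : ℕ) (hn : 0 < n) :
    IsSierpinskiStratification
      (X := FinHypN n X)
      {l : List (Fin n → A) | ∀ i : Fin n, l.map (fun g => g i) ∈ T}
      (fun l => {F : FinHypN n X |
        ∃ f : Fin n → X, (∀ i, f i ∈ Xs (l.map (fun g => g i))) ∧ (F : Set X) = Set.range f}) := by
  classical
  -- notation
  set T' : Set (List (Fin n → A)) := {l : List (Fin n → A) | ∀ i : Fin n, l.map (fun g => g i) ∈ T} with hT'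
  have hnilT : ([] : List A) ∈ T := by
    obtain ⟨l, hl⟩ := hT.nonempty
    exact hT.prefix_closed l hl [] (List.nil_prefix)
  constructor
  · -- countable alphabet
    have := hT.countable_alphabet
    infer_instance
  · -- nonempty
    exact ⟨[], by intro i; simpa using hnilT⟩
  · -- prefix closed
    intro l hl l' hpre i
    exact hT.prefix_closed _ (hl i) _ (hpre.map _)
  · -- closed
    intro l hl
    rw [← isOpen_compl_iff, isOpen_iff_mem_nhds]
    intro F hF
    have hFfin : (F : Set X).Finite := Set.finite_of_encard_le_coe F.2.2
    obtain ⟨U, hU, hdisj⟩ := hFfin.t2_separation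
    set C : Fin n → Set X := fun i => Xs (l.map (fun g => g i)) with hCdef
    have hCclosed : ∀ i, IsClosed (C i) := fun i => hT.isClosed _ (hl i)
    set U' : X → Set X := fun x =>
      U x ∩ ⋂ i : Fin n, (if x ∈ C i then Set.univ else (C i)ᶜ) with hU'def
    have hU'open : ∀ x, IsOpen (U' x) := by
      intro x
      refine (hU x).2.inter (isOpen_iInter_of_finite fun i => ?_)
      split_ifs with h
      · exact isOpen_univ
      · exact (hCclosed i).isOpen_compl
    have hxU' : ∀ x, x ∈ U' x := by
      intro x
      refine ⟨(hU x).1, Set.mem_iInter.2 fun i => ?_⟩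
      split_ifs with h
      · trivial
      · exact h
    set W : Set (Set X) := {G | G ⊆ ⋃ x ∈ (F : Set X), U' x} ∩
      ⋂ x ∈ (F : Set X), {G | (G ∩ U' x).Nonempty} with hWdef
    have hWopen : IsOpen[vietoris ‹TopologicalSpace X›] W := by
      refine @IsOpen.inter _ (vietoris ‹TopologicalSpace X›) _ _ (vietoris_isOpen_subsets ?_) ?_
      · exact isOpen_biUnion fun x _ => hU'open x
      · exact @Set.Finite.isOpen_biInter _ _ (vietoris ‹TopologicalSpace X›) _ _ hFfin
          fun x _ => vietoris_isOpen_hits (hU'open x)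
    have hFW : (F : Set X) ∈ W :=
      ⟨fun y hy => Set.mem_biUnion hy (hxU' y),
        Set.mem_iInter₂.2 fun x hx => ⟨x, hx, hxU' x⟩⟩
    have hsub : (Subtype.val : FinHypN n X → Set X) ⁻¹' W ⊆
        {F : FinHypN n X | ∃ f : Fin n → X,
          (∀ i, f i ∈ Xs (l.map (fun g => g i))) ∧ (F : Set X) = Set.range f}ᶜ := by
      rintro G ⟨hGsub, hGhits⟩ ⟨f, hf, hGf⟩
      have hg : ∀ i : Fin n, ∃ x, x ∈ (F : Set X) ∧ f i ∈ U' x := by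
        intro i
        have : f i ∈ ⋃ x ∈ (F : Set X), U' x :=
          hGsub (by rw [hGf]; exact Set.mem_range_self i)
        simpa using this
      choose g hgF hgU using hg
      have hgC : ∀ i, g i ∈ C i := by
        intro i
        by_contra h
        have h1 : f i ∈ (C i)ᶜ := by
          have h2 := Set.mem_iInter.1 (hgU i).2 i
          rwa [if_neg h] at h2
        exact h1 (hf i)
      have hrange : Set.range g = (F : Set X) := by
        apply Set.Subset.antisymm
        · rintro _ ⟨i, rfl⟩; exact hgF i
        · intro x hx
          obtain ⟨y, hyG, hyU⟩ := Set.mem_iInter₂.1 hGhits x hx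
          rw [hGf] at hyG
          obtain ⟨i, rfl⟩ := hyG
          refine ⟨i, ?_⟩
          by_contra hne
          exact Set.disjoint_left.1 (hdisj (hgF i) hx hne) (hgU i).1 hyU.1
      exact hF ⟨g, hgC, hrange.symm⟩
    rw [finHypN_nhds_eq]
    exact Filter.mem_of_superset
      (Filter.preimage_mem_comap (letI := vietoris ‹TopologicalSpace X›; hWopen.mem_nhds hFW)) hsub
  · -- root
    ext F
    simp only [List.map_nil, Set.mem_setOf_eq, Set.mem_univ, iff_true]
    obtain ⟨f, hf⟩ := exists_range_eq' F.2.1 F.2.2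
    exact ⟨f, fun i => by rw [hT.root]; trivial, hf⟩
  · -- succ_eq
    intro l hl
    ext F
    simp only [Set.mem_setOf_eq, Set.mem_iUnion, exists_prop]
    constructor
    · rintro ⟨f, hf, hFf⟩
      have hx : ∀ i : Fin n, ∃ a : A, (l.map (fun g => g i)) ++ [a] ∈ T ∧
          f i ∈ Xs ((l.map (fun g => g i)) ++ [a]) := by
        intro i
        have := hf i
        rw [hT.succ_eq _ (hl i)] at this
        simp only [Set.mem_iUnion, Set.mem_setOf_eq, exists_prop] at this
        obtain ⟨u, ⟨huT, a, rfl⟩, hfu⟩ := this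
        exact ⟨a, huT, hfu⟩
      choose a ha1 ha2 using hx
      refine ⟨l ++ [a], ⟨?_, ⟨a, rfl⟩⟩, f, ?_, hFf⟩
      · intro i
        simpa using ha1 i
      · intro i
        simpa using ha2 i
    · rintro ⟨u, ⟨huT', a, rfl⟩, f, hf, hFf⟩
      refine ⟨f, fun i => ?_, hFf⟩
      rw [hT.succ_eq _ (hl i)]
      simp only [Set.mem_iUnion, Set.mem_setOf_eq, exists_prop]
      refine ⟨(l.map (fun g => g i)) ++ [a i], ⟨?_, a i, rfl⟩, ?_⟩
      · have := huT' i
        simpa using this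
      · have := hf i
        simpa using this
  · -- branch converges
    intro σ hσ
    have hseg : ∀ (k : ℕ) (i : Fin n), ((List.range k).map σ).map (fun g => g i) =
        (List.range k).map (fun m => σ m i) := by
      intro k i; simp [List.map_map, Function.comp]
    have hσi : ∀ i : Fin n, ∀ k : ℕ, (List.range k).map (fun m => σ m i) ∈ T := by
      intro i k
      have := hσ k i
      rwa [hseg k i] at this
    choose p hp using fun i : Fin n => hT.branch_converges (fun m => σ m i) (hσi i)
    have hpne : (Set.range p).Nonempty := ⟨p ⟨0, hn⟩, Set.mem_range_self _⟩
    have hpcard : (Set.range p).encard ≤ n := by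
      rw [← Set.image_univ]
      refine (Set.encard_image_le _ _).trans ?_
      simp [Set.encard_univ]
    have key : ∀ O : Set (Set X),
        TopologicalSpace.GenerateOpen
          {S | (∃ U : Set X, IsOpen U ∧ S = {F : Set X | F ⊆ U}) ∨
               (∃ U : Set X, IsOpen U ∧ S = {F : Set X | (F ∩ U).Nonempty})} O →
        Set.range p ∈ O →
        ∀ᶠ k in atTop, ∀ F : FinHypN n X,
        (∃ f : Fin n → X, (∀ i, f i ∈ Xs (((List.range k).map σ).map (fun g => g i))) ∧
          (F : Set X) = Set.range f) → (F : Set X) ∈ O := by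
      intro O hOopen
      induction hOopen with
      | basic S hS =>
        intro hPO
        rcases hS with ⟨U, hUopen, rfl⟩ | ⟨U, hUopen, rfl⟩
        · have hall : ∀ i : Fin n, ∀ᶠ k in atTop,
              Xs ((List.range k).map (fun m => σ m i)) ⊆ U := fun i =>
            hp i U (hUopen.mem_nhds (hPO (Set.mem_range_self i)))
          refine (eventually_all.2 hall).mono fun k hk F hF => ?_
          obtain ⟨f, hf, hFf⟩ := hF
          rw [Set.mem_setOf_eq, hFf]
          rintro _ ⟨i, rfl⟩
          refine hk i ?_
          have := hf i
          rwa [hseg k i] at this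
        · obtain ⟨x, ⟨i, rfl⟩, hxU⟩ := hPO
          refine (hp i U (hUopen.mem_nhds hxU)).mono fun k hk F hF => ?_
          obtain ⟨f, hf, hFf⟩ := hF
          refine ⟨f i, ?_, hk ?_⟩
          · rw [hFf]; exact Set.mem_range_self i
          · have := hf i
            rwa [hseg k i] at this
      | univ => exact fun _ => Filter.Eventually.of_forall fun k F hF => trivial
      | inter S₁ S₂ h₁ h₂ ih₁ ih₂ =>
        intro hPO
        exact ((ih₁ hPO.1).and (ih₂ hPO.2)).mono fun k hk F hF => ⟨hk.1 F hF, hk.2 F hF⟩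
      | sUnion S hS ih =>
        intro hPO
        obtain ⟨s, hsS, hPs⟩ := hPO
        exact (ih s hsS hPs).mono fun k hk F hF => ⟨s, hsS, hk F hF⟩
    refine ⟨⟨Set.range p, hpne, hpcard⟩, ?_⟩
    intro V hV
    replace hV : V ∈ Filter.comap Subtype.val (@nhds _ (vietoris ‹TopologicalSpace X›) (Set.range p)) :=
      (Filter.ext_iff.1 (finHypN_nhds_eq (n := n) (⟨Set.range p, hpne, hpcard⟩ : FinHypN n X)) V).1 hV
    obtain ⟨W, hW, hWV⟩ := Filter.mem_comap.1 hV
    obtain ⟨O, hOW, hOopen, hPO⟩ := vietoris_mem_nhds_iff.1 hW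
    exact (key O hOopen hPO).mono fun k hk F hF => hWV (hOW (hk F hF))
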